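/- Let g : ℝ^K → ℝ be defined by g(γ) = ‖w ⊙ γ‖₁^α for a fixed 0-1 vector w ∈ {0,1}^K and α ∈ (0,1), and define for ζ > 0 the surrogate s(γ, ζ) = (α^α/(1−α)^{α−1})·ζ^{1−1/α}·‖w ⊙ γ‖₁ + α^α (1−α)^{1−α} ζ. Then for every γ with ‖w ⊙ γ‖₁ > 0, the minimum of ζ ↦ s(γ, ζ) over ζ > 0 is attained at ζ*(γ) = ((1−α)/α)^α ‖w ⊙ γ‖₁^α, and min_{ζ>0} s(γ, ζ) = g(γ). -/

import Mathlib

theorem stmt_18 (K : ℕ) (w γ : Fin K → ℝ) (hw : ∀ k, w k = 0 ∨ w k = 1)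
    (α : ℝ) (hα : α ∈ Set.Ioo (0:ℝ) 1) (a : ℝ)
    (ha_def : a = ∑ k, w k * |γ k|) (ha : 0 < a) :
    (α^α / (1-α)^(α-1)) * (((1-α)/α)^α * a^α)^(1 - 1/α) * a
        + α^α * (1-α)^(1-α) * (((1-α)/α)^α * a^α) = a^α ∧
    ∀ ζ : ℝ, 0 < ζ →
      a^α ≤ (α^α / (1-α)^(α-1)) * ζ^(1 - 1/α) * a + α^α * (1-α)^(1-α) * ζ := by
  obtain ⟨hα0, hα1⟩ := hα
  have h1α : (0:ℝ) < 1 - α := by linarith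
  have hαne : α ≠ 0 := ne_of_gt hα0
  have ht : (0:ℝ) < (1-α)/α := by positivity
  have hA : α^α / (1-α)^(α-1) = α^α * (1-α)^(1-α) := by
    rw [div_eq_mul_inv, ← Real.rpow_neg h1α.le, neg_sub]
  have he : 1 - 1/α = (α-1)/α := by field_simp
  have hone : (1-α)^(1-α)*(1-α)^(α-1) = 1 := by
    rw [← Real.rpow_add h1α]; norm_num
  have hαdiv : α^α / α^(α-1) = α := by
    rw [← Real.rpow_sub hα0]; norm_num
  constructor
  · have e0 : α*(1-1/α) = α-1 := by field_simp
    have e1 : (((1-α)/α)^α * a^α)^(1-1/α)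
        = ((1-α)/α)^(α-1) * a^(α-1) := by
      rw [Real.mul_rpow (Real.rpow_nonneg ht.le _) (Real.rpow_nonneg ha.le _),
        ← Real.rpow_mul ht.le, ← Real.rpow_mul ha.le, e0]
    rw [hA, e1, Real.div_rpow h1α.le hα0.le, Real.div_rpow h1α.le hα0.le]
    have haa : a^(α-1) * a = a^α := by
      nth_rewrite 2 [← Real.rpow_one a]
      rw [← Real.rpow_add ha]; norm_num
    have hsum : (1-α)^(1-α) * (1-α)^α = 1-α := by
      rw [← Real.rpow_add h1α]; norm_num
    have hαmul : α^α = α^(α-1) * α := by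
      have h := Real.rpow_add hα0 (α-1) 1
      simpa using h
    field_simp
    linear_combination α^α * a^(α-1) * a * hone + α^α * haa
      + α^(α-1) * a^α * hsum + a^α * hαmul
  · intro ζ hζ
    set x := a * ζ^((α-1)/α) with hx
    have hxpos : 0 < x := by positivity
    have key := Real.geom_mean_le_arith_mean2_weighted hα0.le h1α.le
      (div_nonneg hxpos.le hα0.le) (div_nonneg hζ.le h1α.le) (by ring)
    have hz1 : (ζ^((α-1)/α))^α = ζ^(α-1) := by
      rw [← Real.rpow_mul hζ.le]; congr 1; field_simp
    have hz2 : ζ^(α-1) * ζ^(1-α) = 1 := by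
      rw [← Real.rpow_add hζ]; norm_num
    have hlhs : (x/α)^α * (ζ/(1-α))^(1-α)
        = a^α / (α^α * (1-α)^(1-α)) := by
      rw [Real.div_rpow hxpos.le hα0.le, Real.div_rpow hζ.le h1α.le, hx,
        Real.mul_rpow ha.le (Real.rpow_nonneg hζ.le _), hz1]
      field_simp
      nlinarith [Real.rpow_pos_of_pos ha α, Real.rpow_pos_of_pos hζ (α-1),
        Real.rpow_pos_of_pos hζ (1-α), hz2]
    have hrhs : α * (x/α) + (1-α) * (ζ/(1-α)) = x + ζ := by
      field_simp
    rw [hlhs, hrhs, div_le_iff₀ (by positivity)] at key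
    rw [hA, he]
    calc a^α ≤ (x + ζ) * (α^α * (1-α)^(1-α)) := key
    _ = α^α * (1-α)^(1-α) * ζ^((α-1)/α) * a + α^α * (1-α)^(1-α) * ζ := by
        rw [hx]; ring
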